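/- Let X ⊂ ℝ^d be a closed convex set of diameter at most D, let l_1,…,l_T be convex G-Lipschitz functions on X, and let λ_1,…,λ_{T-1} ∈ (0,∞) be discount factors. Consider Online Gradient Descent: x_1 ∈ X arbitrary and x_{t+1} = Π_X(x_t − η_t g_t), where g_t ∈ ∂l_t(x_t), Π_X is the Euclidean projection onto X, and η_t = D·G^{-1}·H_t^{-1/2}. Then for all T ∈ ℕ_+ and all comparators u ∈ X, the discounted regret satisfies Reg_T := Σ_{t=1}^T (∏_{i=t}^{T-1} λ_i)·[l_t(x_t) − l_t(u)] ≤ (3/2)·D·G·√H_T. -/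

import Mathlib

open scoped BigOperators RealInnerProductSpace

lemma proj_sq_le {F : Type*} [NormedAddCommGroup F] [InnerProductSpace ℝ F]
    {X : Set F} (hX : Convex ℝ X) {p z u : F} (hp : p ∈ X) (hu : u ∈ X)
    (hmin : ∀ y ∈ X, ‖p - z‖ ≤ ‖y - z‖) : ‖p - u‖^2 ≤ ‖z - u‖^2 := by
  have hne : Nonempty X := ⟨⟨p, hp⟩⟩
  have hinf : ‖z - p‖ = ⨅ w : X, ‖z - (w : F)‖ := by
    apply le_antisymm
    · exact le_ciInf fun w => by
        rw [norm_sub_rev, norm_sub_rev z (w : F)]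
        exact hmin w w.2
    · have hbdd : BddBelow (Set.range fun w : X => ‖z - (w : F)‖) :=
        ⟨0, by rintro r ⟨w, rfl⟩; positivity⟩
      exact ciInf_le hbdd ⟨p, hp⟩
  have hvar := (norm_eq_iInf_iff_real_inner_le_zero hX hp).mp hinf u hu
  have expand : ‖z - u‖^2 = ‖z - p‖^2 - 2 * ⟪z - p, u - p⟫ + ‖u - p‖^2 := by
    have h1 : z - u = (z - p) - (u - p) := by abel
    rw [h1, norm_sub_sq_real]
  rw [norm_sub_rev p u]
  nlinarith [sq_nonneg ‖z - p‖]

lemma div_sqrt_le (a b : ℝ) (ha : 0 ≤ a) (hab : a ≤ b) :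
    (b - a) / Real.sqrt b ≤ 2 * (Real.sqrt b - Real.sqrt a) := by
  rcases eq_or_lt_of_le (ha.trans hab) with h | h
  · have hb : b = 0 := h.symm
    have ha0 : a = 0 := le_antisymm (hab.trans_eq hb) ha
    simp [hb, ha0]
  · have hsb := Real.sqrt_pos.mpr h
    rw [div_le_iff₀ hsb]
    have h1 : Real.sqrt a ≤ Real.sqrt b := Real.sqrt_le_sqrt hab
    have ha' : Real.sqrt a ^ 2 = a := Real.sq_sqrt ha
    have hb' : Real.sqrt b ^ 2 = b := Real.sq_sqrt (by linarith)
    nlinarith [Real.sqrt_nonneg a, sq_nonneg (Real.sqrt b - Real.sqrt a)]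

lemma abel_bound (c a : ℕ → ℝ) (B : ℝ) (ha0 : ∀ t, 0 ≤ a t) (haB : ∀ t, a t ≤ B) :
    ∀ T, 1 ≤ T → (∀ t, 1 ≤ t → t ≤ T → 0 ≤ c t) → (∀ t, 1 ≤ t → t + 1 ≤ T → c t ≤ c (t+1)) →
    ∑ t ∈ Finset.Icc 1 T, c t * (a t - a (t+1)) ≤ c T * (B - a (T+1)) := by
  intro T hT
  induction T, hT using Nat.le_induction with
  | base =>
    intro hc0 _
    rw [Finset.Icc_self, Finset.sum_singleton]
    have := hc0 1 le_rfl le_rfl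
    have := haB 1
    nlinarith
  | succ n hn ih =>
    intro hc0 hcm
    rw [Finset.sum_Icc_succ_top (by omega : 1 ≤ n + 1)]
    have hih := ih (fun t h1 h2 => hc0 t h1 (by omega)) (fun t h1 h2 => hcm t h1 (by omega))
    have h1 : c n ≤ c (n+1) := hcm n hn le_rfl
    have h2 : 0 ≤ B - a (n+1) := by linarith [haB (n+1)]
    have h3 : c n * (B - a (n+1)) ≤ c (n+1) * (B - a (n+1)) := mul_le_mul_of_nonneg_right h1 h2
    nlinarith [hih]

lemma sqrt_sum_bound (K : ℕ → ℝ) (T : ℕ) (hK0 : K 0 = 0)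
    (hmono : ∀ t, 1 ≤ t → t ≤ T → K (t-1) ≤ K t) (hnn : ∀ t, 0 ≤ K t) :
    ∑ t ∈ Finset.Icc 1 T, (K t - K (t-1)) / Real.sqrt (K t) ≤ 2 * Real.sqrt (K T) := by
  have hle : ∑ t ∈ Finset.Icc 1 T, (K t - K (t-1)) / Real.sqrt (K t)
      ≤ ∑ t ∈ Finset.Icc 1 T, (2 * Real.sqrt (K t) - 2 * Real.sqrt (K (t-1))) := by
    apply Finset.sum_le_sum
    intro t ht
    obtain ⟨h1, h2⟩ := Finset.mem_Icc.mp ht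
    have := div_sqrt_le (K (t-1)) (K t) (hnn _) (hmono t h1 h2)
    linarith
  refine hle.trans ?_
  calc ∑ t ∈ Finset.Icc 1 T, (2 * Real.sqrt (K t) - 2 * Real.sqrt (K (t-1)))
      = ∑ i ∈ Finset.range T, (2 * Real.sqrt (K (i+1)) - 2 * Real.sqrt (K i)) := by
        rw [← Finset.Ico_add_one_right_eq_Icc, Finset.sum_Ico_eq_sum_range]
        apply Finset.sum_congr rfl
        intro i _
        have e1 : 1 + i = i + 1 := by omega
        rw [e1]
        norm_num
    _ = 2 * Real.sqrt (K T) - 2 * Real.sqrt (K 0) :=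
        Finset.sum_range_sub (fun j => 2 * Real.sqrt (K j)) T
    _ ≤ 2 * Real.sqrt (K T) := by
        rw [hK0, Real.sqrt_zero]
        simp

/-- Constant-scheme OGD with learning rate `η_t = D·G⁻¹·H_t^{-1/2}`
achieves discounted regret at most `(3/2)·D·G·√H_T`. -/
theorem ogd_discounted_regret
    (d T : ℕ) (hT : 1 ≤ T)
    (X : Set (EuclideanSpace ℝ (Fin d))) (hXclosed : IsClosed X) (hXconvex : Convex ℝ X)
    (D G : ℝ) (hD : 0 < D) (hG : 0 < G)
    (hdiam : ∀ x ∈ X, ∀ y ∈ X, ‖x - y‖ ≤ D)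
    (lam : ℕ → ℝ) (hlam : ∀ i, 0 < lam i)
    (l : ℕ → EuclideanSpace ℝ (Fin d) → ℝ)
    (hconv : ∀ t, ConvexOn ℝ X (l t))
    (x g : ℕ → EuclideanSpace ℝ (Fin d))
    (hxX : ∀ t, x t ∈ X)
    (hsub : ∀ t, ∀ y ∈ X, l t (x t) + ⟪g t, y - x t⟫ ≤ l t y)
    (hLip : ∀ t, ‖g t‖ ≤ G)
    (H : ℕ → ℝ)
    (hH : ∀ t, H t = ∑ i ∈ Finset.Icc 1 t, ∏ j ∈ Finset.Icc i (t-1), (lam j)^2)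
    (η : ℕ → ℝ) (hη : ∀ t, η t = D * G⁻¹ * (Real.sqrt (H t))⁻¹)
    (hOGD : ∀ t, 1 ≤ t → x (t+1) ∈ X ∧
      ∀ y ∈ X, ‖x (t+1) - (x t - η t • g t)‖ ≤ ‖y - (x t - η t • g t)‖)
    (u : EuclideanSpace ℝ (Fin d)) (hu : u ∈ X) :
    ∑ t ∈ Finset.Icc 1 T, (∏ i ∈ Finset.Icc t (T-1), lam i) * (l t (x t) - l t u)
      ≤ (3/2) * D * G * Real.sqrt (H T) := by
  have hGne : G ≠ 0 := ne_of_gt hG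
  have hDne : D ≠ 0 := ne_of_gt hD
  -- discount products
  set β : ℕ → ℝ := fun t => ∏ i ∈ Finset.Icc t (T-1), lam i with hβ
  have hβpos : ∀ t, 0 < β t := fun t => Finset.prod_pos fun i _ => hlam i
  have hIccIco : ∀ a b : ℕ, 1 ≤ b → Finset.Icc a (b-1) = Finset.Ico a b := by
    intro a b hb
    ext k
    simp only [Finset.mem_Icc, Finset.mem_Ico]
    omega
  have hβIco : ∀ t, β t = ∏ i ∈ Finset.Ico t T, lam i := by
    intro t
    rw [hβ]
    simp only []
    rw [hIccIco t T hT]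
  -- H facts
  have hHIco : ∀ t, 1 ≤ t → H t = ∑ i ∈ Finset.Icc 1 t, ∏ j ∈ Finset.Ico i t, (lam j)^2 := by
    intro t ht
    rw [hH t]
    apply Finset.sum_congr rfl
    intro i _
    rw [hIccIco i t ht]
  have hHpos : ∀ t, 1 ≤ t → 0 < H t := by
    intro t ht
    rw [hH t]
    apply Finset.sum_pos
    · intro i _
      exact Finset.prod_pos fun j _ => pow_pos (hlam j) 2
    · exact ⟨1, Finset.mem_Icc.mpr ⟨le_rfl, ht⟩⟩
  have hsqrtpos : ∀ t, 1 ≤ t → 0 < Real.sqrt (H t) := fun t ht => Real.sqrt_pos.mpr (hHpos t ht)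
  have hηpos : ∀ t, 1 ≤ t → 0 < η t := by
    intro t ht
    rw [hη]
    exact mul_pos (mul_pos hD (inv_pos.mpr hG)) (inv_pos.mpr (hsqrtpos t ht))
  have hHrec : ∀ t, 1 ≤ t → H (t+1) = 1 + (lam t)^2 * H t := by
    intro t ht
    rw [hHIco (t+1) (by omega), hHIco t ht]
    rw [Finset.sum_Icc_succ_top (by omega : 1 ≤ t+1)]
    rw [Finset.Ico_self, Finset.prod_empty, Finset.mul_sum, add_comm]
    congr 1
    apply Finset.sum_congr rfl
    intro i hi
    have hi' : i ≤ t := (Finset.mem_Icc.mp hi).2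
    rw [Finset.prod_Ico_succ_top hi', mul_comm]
  -- K
  set K : ℕ → ℝ := fun t => ∑ i ∈ Finset.Icc 1 t, ∏ j ∈ Finset.Ico i T, (lam j)^2 with hK
  have hK0 : K 0 = 0 := by simp [hK]
  have hKnn : ∀ t, 0 ≤ K t := by
    intro t
    apply Finset.sum_nonneg
    intro i _
    exact Finset.prod_nonneg fun j _ => sq_nonneg _
  have hKdiff : ∀ t, 1 ≤ t → K t = K (t-1) + (β t)^2 := by
    intro t ht
    obtain ⟨s, rfl⟩ : ∃ s, t = s + 1 := ⟨t-1, by omega⟩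
    simp only [hK, Nat.add_sub_cancel]
    rw [Finset.sum_Icc_succ_top (by omega : 1 ≤ s+1)]
    congr 1
    rw [hβIco, ← Finset.prod_pow]
  have hKeq : ∀ t, 1 ≤ t → t ≤ T → K t = (β t)^2 * H t := by
    intro t ht htT
    rw [hHIco t ht, hK, Finset.mul_sum]
    simp only []
    apply Finset.sum_congr rfl
    intro i hi
    have hi' : i ≤ t := (Finset.mem_Icc.mp hi).2
    rw [hβIco, ← Finset.prod_pow, mul_comm, Finset.prod_Ico_consecutive _ hi' htT]
  -- the per-round inequality
  have hstep : ∀ t, 1 ≤ t → ⟪g t, x t - u⟫ ≤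
      (‖x t - u‖^2 - ‖x (t+1) - u‖^2) / (2 * η t) + η t * G^2 / 2 := by
    intro t ht
    obtain ⟨hmem, hmin⟩ := hOGD t ht
    have hsq : ‖x (t+1) - u‖^2 ≤ ‖(x t - η t • g t) - u‖^2 :=
      proj_sq_le hXconvex hmem hu hmin
    have hηt := hηpos t ht
    have hexp : ‖(x t - η t • g t) - u‖^2
        = ‖x t - u‖^2 - 2 * (η t * ⟪g t, x t - u⟫) + (η t)^2 * ‖g t‖^2 := by
      have h1 : (x t - η t • g t) - u = (x t - u) - η t • g t := by abel
      rw [h1, norm_sub_sq_real, real_inner_smul_right, norm_smul,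
        Real.norm_eq_abs, mul_pow, sq_abs, real_inner_comm]
    have hg2 : ‖g t‖^2 ≤ G^2 := by nlinarith [norm_nonneg (g t), hLip t]
    have h2 : ⟪g t, x t - u⟫ * (2 * η t)
        ≤ ‖x t - u‖^2 - ‖x (t+1) - u‖^2 + (η t)^2 * G^2 := by
      nlinarith [mul_le_mul_of_nonneg_left hg2 (sq_nonneg (η t))]
    have goal_eq : (‖x t - u‖^2 - ‖x (t+1) - u‖^2) / (2 * η t) + η t * G^2 / 2
        = (‖x t - u‖^2 - ‖x (t+1) - u‖^2 + (η t)^2 * G^2) / (2 * η t) := by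
      field_simp
    rw [goal_eq, le_div_iff₀ (by positivity)]
    exact h2
  -- linearization
  have hlin : ∀ t, l t (x t) - l t u ≤ ⟪g t, x t - u⟫ := by
    intro t
    have h := hsub t u hu
    rw [show u - x t = -(x t - u) by abel, inner_neg_right] at h
    linarith
  -- coefficients
  set c : ℕ → ℝ := fun t => β t * G * Real.sqrt (H t) / (2 * D) with hc
  have hc0 : ∀ t, 1 ≤ t → t ≤ T → 0 ≤ c t := by
    intro t ht _
    have := hβpos t
    have := hsqrtpos t ht
    positivity
  have hcm : ∀ t, 1 ≤ t → t + 1 ≤ T → c t ≤ c (t+1) := by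
    intro t ht htT
    have hsplit : β t = lam t * β (t+1) := by
      rw [hβIco, hβIco]
      exact Finset.prod_eq_prod_Ico_succ_bot (by omega : t < T) lam
    have hs : lam t * Real.sqrt (H t) ≤ Real.sqrt (H (t+1)) := by
      have h1 : lam t * Real.sqrt (H t) = Real.sqrt ((lam t)^2 * H t) := by
        rw [Real.sqrt_mul (sq_nonneg _), Real.sqrt_sq (hlam t).le]
      rw [h1]
      apply Real.sqrt_le_sqrt
      rw [hHrec t ht]
      linarith
    have key : β t * Real.sqrt (H t) ≤ β (t+1) * Real.sqrt (H (t+1)) := by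
      calc β t * Real.sqrt (H t) = β (t+1) * (lam t * Real.sqrt (H t)) := by
            rw [hsplit]; ring
        _ ≤ β (t+1) * Real.sqrt (H (t+1)) := by
            exact mul_le_mul_of_nonneg_left hs (hβpos (t+1)).le
    simp only [hc]
    apply div_le_div_of_nonneg_right ?_ (by positivity)
    calc β t * G * Real.sqrt (H t) = (β t * Real.sqrt (H t)) * G := by ring
      _ ≤ (β (t+1) * Real.sqrt (H (t+1))) * G := mul_le_mul_of_nonneg_right key hG.le
      _ = β (t+1) * G * Real.sqrt (H (t+1)) := by ring
  -- per-term bound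
  have hterm : ∀ t ∈ Finset.Icc 1 T,
      β t * (l t (x t) - l t u) ≤
        c t * (‖x t - u‖^2 - ‖x (t+1) - u‖^2) + (D * G / 2) * (β t / Real.sqrt (H t)) := by
    intro t hti
    obtain ⟨ht1, htT⟩ := Finset.mem_Icc.mp hti
    have h1 : β t * (l t (x t) - l t u)
        ≤ β t * ((‖x t - u‖^2 - ‖x (t+1) - u‖^2) / (2 * η t) + η t * G^2 / 2) :=
      mul_le_mul_of_nonneg_left ((hlin t).trans (hstep t ht1)) (hβpos t).le
    refine h1.trans_eq ?_
    have hs := hsqrtpos t ht1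
    have hsne : Real.sqrt (H t) ≠ 0 := ne_of_gt hs
    rw [hc, hη]
    simp only []
    field_simp
  -- diameter bounds
  have ha0 : ∀ t, 0 ≤ ‖x t - u‖^2 := fun t => sq_nonneg _
  have haB : ∀ t, ‖x t - u‖^2 ≤ D^2 := by
    intro t
    have h := hdiam (x t) (hxX t) u hu
    nlinarith [norm_nonneg (x t - u)]
  -- term 1
  have hterm1 : ∑ t ∈ Finset.Icc 1 T, c t * (‖x t - u‖^2 - ‖x (t+1) - u‖^2)
      ≤ c T * D^2 := by
    have h := abel_bound c (fun t => ‖x t - u‖^2) (D^2) ha0 haB T hT hc0 hcm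
    have h2 : c T * (D^2 - ‖x (T+1) - u‖^2) ≤ c T * D^2 := by
      have := hc0 T hT le_rfl
      nlinarith [ha0 (T+1)]
    exact h.trans h2
  -- term 2
  have hKmono : ∀ t, 1 ≤ t → t ≤ T → K (t-1) ≤ K t := by
    intro t ht _
    rw [hKdiff t ht]
    nlinarith [sq_nonneg (β t)]
  have hβT : β T = 1 := by
    rw [hβ]
    simp only []
    rw [Finset.Icc_eq_empty (by omega : ¬ T ≤ T - 1), Finset.prod_empty]
  have hterm2 : ∑ t ∈ Finset.Icc 1 T, β t / Real.sqrt (H t) ≤ 2 * Real.sqrt (H T) := by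
    have heach : ∀ t ∈ Finset.Icc 1 T,
        β t / Real.sqrt (H t) = (K t - K (t-1)) / Real.sqrt (K t) := by
      intro t hti
      obtain ⟨ht1, htT⟩ := Finset.mem_Icc.mp hti
      have h1 : K t - K (t-1) = β t ^ 2 := by
        have := hKdiff t ht1
        linarith
      have h2 : Real.sqrt (K t) = β t * Real.sqrt (H t) := by
        rw [hKeq t ht1 htT, Real.sqrt_mul (sq_nonneg _), Real.sqrt_sq (hβpos t).le]
      rw [h1, h2, pow_two, mul_div_mul_left _ _ (ne_of_gt (hβpos t))]
    rw [Finset.sum_congr rfl heach]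
    have hbd := sqrt_sum_bound K T hK0 hKmono hKnn
    have hKT : K T = H T := by
      rw [hKeq T hT le_rfl, hβT]
      ring
    rwa [hKT] at hbd
  -- combine
  calc ∑ t ∈ Finset.Icc 1 T, (∏ i ∈ Finset.Icc t (T-1), lam i) * (l t (x t) - l t u)
      = ∑ t ∈ Finset.Icc 1 T, β t * (l t (x t) - l t u) := rfl
    _ ≤ ∑ t ∈ Finset.Icc 1 T,
        (c t * (‖x t - u‖^2 - ‖x (t+1) - u‖^2) + (D * G / 2) * (β t / Real.sqrt (H t))) :=
        Finset.sum_le_sum hterm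
    _ = (∑ t ∈ Finset.Icc 1 T, c t * (‖x t - u‖^2 - ‖x (t+1) - u‖^2))
        + (D * G / 2) * ∑ t ∈ Finset.Icc 1 T, β t / Real.sqrt (H t) := by
        rw [Finset.sum_add_distrib, Finset.mul_sum]
    _ ≤ c T * D^2 + (D * G / 2) * (2 * Real.sqrt (H T)) := by
        apply add_le_add hterm1
        apply mul_le_mul_of_nonneg_left hterm2 (by positivity)
    _ = (3/2) * D * G * Real.sqrt (H T) := by
        rw [hc]
        simp only []
        rw [hβT]
        field_simp
        ring
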